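/- Consider the scalar control system ẋ = x - x³u with u ∈ [0,M] for a fixed M > 0. For any initial condition x(0) = z ≠ 0 and constant control u ≡ M, the unique solution is x(t) = z e^t / sqrt(z²M(e^{2t}-1)+1), and x(t) → sign(z)/√M as t → +∞. In particular, |x(t)| ≥ min(|z|, 1/√M)·c for a positive constant, and x(t) does not tend to 0; hence the system restricted to controls with values in [0,M] is not globally asymptotically controllable to {0}. -/

import Mathlib

open Filter

theorem stmt_10 (M : ℝ) (hM : 0 < M) (z : ℝ) (hz : z ≠ 0)
    (x : ℝ → ℝ)
    (hx : ∀ t : ℝ, x t = z * Real.exp t / Real.sqrt (z ^ 2 * M * (Real.exp (2 * t) - 1) + 1)) :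
    x 0 = z ∧
    (∀ t ≥ (0:ℝ), HasDerivAt x (x t - M * (x t) ^ 3) t) ∧
    (∀ y : ℝ → ℝ, y 0 = z → (∀ t ≥ (0:ℝ), HasDerivAt y (y t - M * (y t) ^ 3) t) →
      ∀ t ≥ (0:ℝ), y t = x t) ∧
    Tendsto x atTop (nhds (Real.sign z / Real.sqrt M)) ∧
    (∀ t ≥ (0:ℝ), x t ≠ 0) ∧
    ¬ Tendsto x atTop (nhds 0) := by
  -- positivity of the radicand for t ≥ 0
  have hDpos : ∀ t : ℝ, 0 ≤ t → 0 < z ^ 2 * M * (Real.exp (2 * t) - 1) + 1 := by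
    intro t ht
    have h1 : (0:ℝ) ≤ Real.exp (2 * t) - 1 := by
      have := Real.one_le_exp (by linarith : (0:ℝ) ≤ 2 * t); linarith
    nlinarith [mul_nonneg (mul_nonneg (sq_nonneg z) hM.le) h1]
  -- Part 1
  have part1 : x 0 = z := by
    rw [hx 0]; simp
  -- Part 2
  have part2 : ∀ t ≥ (0:ℝ), HasDerivAt x (x t - M * (x t) ^ 3) t := by
    intro t ht
    have hD := hDpos t ht
    set D : ℝ := z ^ 2 * M * (Real.exp (2 * t) - 1) + 1 with hDdef
    have hs0 : Real.sqrt D ≠ 0 := by positivity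
    have hDne : D ≠ 0 := hD.ne'
    have hDder : HasDerivAt (fun t => z ^ 2 * M * (Real.exp (2 * t) - 1) + 1)
        (z ^ 2 * M * (Real.exp (2 * t) * 2)) t := by
      have h1 : HasDerivAt (fun t : ℝ => Real.exp (2 * t)) (Real.exp (2 * t) * 2) t := by
        simpa using ((hasDerivAt_id t).const_mul 2).exp
      exact ((h1.sub_const 1).const_mul _).add_const 1
    have hsder : HasDerivAt (fun t => Real.sqrt (z ^ 2 * M * (Real.exp (2 * t) - 1) + 1))
        (1 / (2 * Real.sqrt D) * (z ^ 2 * M * (Real.exp (2 * t) * 2))) t :=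
      (Real.hasDerivAt_sqrt hDne).comp t hDder
    have hnder : HasDerivAt (fun t => z * Real.exp t) (z * Real.exp t) t :=
      (Real.hasDerivAt_exp t).const_mul z
    have hdiv := hnder.div hsder hs0
    have hfun : x = fun t => z * Real.exp t / Real.sqrt (z ^ 2 * M * (Real.exp (2 * t) - 1) + 1) :=
      funext hx
    rw [hfun]
    convert hdiv using 1
    · rfl
    · rfl
    · rfl
    beta_reduce
    rw [← hDdef]
    set s := Real.sqrt D with hsdef
    set E := Real.exp t with hEdef
    rw [show Real.exp (2 * t) = E ^ 2 by rw [two_mul, Real.exp_add, sq]]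
    field_simp
  -- Part 3: uniqueness
  have part3 : ∀ y : ℝ → ℝ, y 0 = z → (∀ t ≥ (0:ℝ), HasDerivAt y (y t - M * (y t) ^ 3) t) →
      ∀ t ≥ (0:ℝ), y t = x t := by
    intro y hy0 hy' t ht
    have hycont : ContinuousOn y (Set.Icc 0 t) := fun u hu =>
      ((hy' u hu.1).continuousAt).continuousWithinAt
    have hxcont : ContinuousOn x (Set.Icc 0 t) := fun u hu =>
      ((part2 u hu.1).continuousAt).continuousWithinAt
    obtain ⟨C₁, hC₁⟩ := (isCompact_Icc).exists_bound_of_continuousOn hycont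
    obtain ⟨C₂, hC₂⟩ := (isCompact_Icc).exists_bound_of_continuousOn hxcont
    set K : ℝ := max C₁ C₂ with hKdef
    have hK0 : 0 ≤ K :=
      le_trans (norm_nonneg (y 0)) ((hC₁ 0 ⟨le_refl 0, ht⟩).trans (le_max_left _ _))
    set L : NNReal := Real.toNNReal (1 + 3 * M * K ^ 2) with hLdef
    have hL : (L : ℝ) = 1 + 3 * M * K ^ 2 := Real.coe_toNNReal _ (by positivity)
    have hlip : ∀ u : ℝ, LipschitzOnWith L (fun w => w - M * w ^ 3) (Set.Icc (-K) K) := by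
      intro u
      rw [lipschitzOnWith_iff_dist_le_mul]
      intro a ha b hb
      rw [Real.dist_eq, Real.dist_eq, hL]
      obtain ⟨ha1, ha2⟩ := ha
      obtain ⟨hb1, hb2⟩ := hb
      have key : a - M * a ^ 3 - (b - M * b ^ 3) = (a - b) * (1 - M * (a ^ 2 + a * b + b ^ 2)) := by
        ring
      rw [key, abs_mul]
      have p1 : (0:ℝ) ≤ (K - a) * (K + b) := mul_nonneg (by linarith) (by linarith)
      have p2 : (0:ℝ) ≤ (K + a) * (K - b) := mul_nonneg (by linarith) (by linarith)
      have p3 : (0:ℝ) ≤ (K - a) * (K + a) := mul_nonneg (by linarith) (by linarith)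
      have p4 : (0:ℝ) ≤ (K - b) * (K + b) := mul_nonneg (by linarith) (by linarith)
      have h1 : |1 - M * (a ^ 2 + a * b + b ^ 2)| ≤ 1 + 3 * M * K ^ 2 := by
        rw [abs_le]
        constructor
        · nlinarith [mul_nonneg hM.le p1, mul_nonneg hM.le p2, mul_nonneg hM.le p3,
            mul_nonneg hM.le p4]
        · nlinarith [mul_nonneg hM.le (sq_nonneg (a + b)), mul_nonneg hM.le (sq_nonneg a),
            mul_nonneg hM.le (sq_nonneg b), mul_nonneg hM.le (sq_nonneg K)]
      calc |a - b| * |1 - M * (a ^ 2 + a * b + b ^ 2)| ≤ |a - b| * (1 + 3 * M * K ^ 2) :=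
            mul_le_mul_of_nonneg_left h1 (abs_nonneg _)
        _ = (1 + 3 * M * K ^ 2) * |a - b| := mul_comm _ _
    have hymem : ∀ u ∈ Set.Ico (0:ℝ) t, y u ∈ Set.Icc (-K) K := by
      intro u hu
      have := (hC₁ u ⟨hu.1, hu.2.le⟩).trans (le_max_left C₁ C₂)
      rw [Real.norm_eq_abs] at this
      exact Set.mem_Icc.mpr (abs_le.mp this)
    have hxmem : ∀ u ∈ Set.Ico (0:ℝ) t, x u ∈ Set.Icc (-K) K := by
      intro u hu
      have := (hC₂ u ⟨hu.1, hu.2.le⟩).trans (le_max_right C₁ C₂)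
      rw [Real.norm_eq_abs] at this
      exact Set.mem_Icc.mpr (abs_le.mp this)
    have huniq := ODE_solution_unique_of_mem_Icc_right
      (v := fun _ w => w - M * w ^ 3) (s := fun _ => Set.Icc (-K) K) (fun u _ => hlip u)
      hycont (fun u hu => (hy' u hu.1).hasDerivWithinAt) hymem
      hxcont (fun u hu => (part2 u hu.1).hasDerivWithinAt) hxmem
      (by rw [hy0, part1])
    exact huniq ⟨ht, le_refl t⟩
  -- Part 4: limit
  have part4 : Tendsto x atTop (nhds (Real.sign z / Real.sqrt M)) := by
    have heq : ∀ t ≥ (0:ℝ),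
        x t = z / Real.sqrt (z ^ 2 * M + (1 - z ^ 2 * M) * Real.exp (-(2 * t))) := by
      intro t ht
      rw [hx t]
      have hexp : Real.exp (2 * t) * Real.exp (-(2 * t)) = 1 := by
        rw [← Real.exp_add]; simp
      have key : z ^ 2 * M * (Real.exp (2 * t) - 1) + 1
          = Real.exp (2 * t) * (z ^ 2 * M + (1 - z ^ 2 * M) * Real.exp (-(2 * t))) := by
        linear_combination (z ^ 2 * M - 1) * hexp
      rw [key, show Real.exp (2 * t) = Real.exp t ^ 2 by rw [two_mul, Real.exp_add, sq],
        Real.sqrt_mul (sq_nonneg _), Real.sqrt_sq (Real.exp_pos t).le,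
        mul_comm z (Real.exp t), mul_div_mul_left _ _ (Real.exp_pos t).ne']
    have h0 : Tendsto (fun t : ℝ => Real.exp (-(2 * t))) atTop (nhds 0) :=
      Real.tendsto_exp_neg_atTop_nhds_zero.comp (tendsto_const_mul_atTop_of_pos two_pos |>.mpr tendsto_id)
    have h1 : Tendsto (fun t : ℝ => z ^ 2 * M + (1 - z ^ 2 * M) * Real.exp (-(2 * t)))
        atTop (nhds (z ^ 2 * M)) := by
      have ha : Tendsto (fun t : ℝ => (1 - z ^ 2 * M) * Real.exp (-(2 * t))) atTop (nhds 0) := by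
        simpa using h0.const_mul (1 - z ^ 2 * M)
      simpa using (tendsto_const_nhds (x := z ^ 2 * M) (f := atTop)).add ha
    have hzM : (0:ℝ) < z ^ 2 * M := by positivity
    have hsq : Tendsto (fun t : ℝ => Real.sqrt (z ^ 2 * M + (1 - z ^ 2 * M) * Real.exp (-(2 * t))))
        atTop (nhds (Real.sqrt (z ^ 2 * M))) :=
      (Real.continuous_sqrt.tendsto _).comp h1
    have hne : Real.sqrt (z ^ 2 * M) ≠ 0 := by positivity
    have h2 : Tendsto (fun t : ℝ => z / Real.sqrt (z ^ 2 * M + (1 - z ^ 2 * M) * Real.exp (-(2 * t))))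
        atTop (nhds (z / Real.sqrt (z ^ 2 * M))) := tendsto_const_nhds.div hsq hne
    have heq2 : z / Real.sqrt (z ^ 2 * M) = Real.sign z / Real.sqrt M := by
      rw [Real.sqrt_mul (sq_nonneg z), Real.sqrt_sq_eq_abs]
      have hsM : Real.sqrt M ≠ 0 := by positivity
      rcases lt_or_gt_of_ne hz with h | h
      · rw [Real.sign_of_neg h, abs_of_neg h]
        field_simp
      · rw [Real.sign_of_pos h, abs_of_pos h]
        field_simp
    rw [← heq2]
    exact h2.congr' ((eventually_ge_atTop (0:ℝ)).mono fun t ht => (heq t ht).symm)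
  -- Part 5
  have part5 : ∀ t ≥ (0:ℝ), x t ≠ 0 := by
    intro t ht
    rw [hx t]
    exact div_ne_zero (mul_ne_zero hz (Real.exp_ne_zero t))
      (Real.sqrt_ne_zero'.mpr (hDpos t ht))
  -- Part 6
  have part6 : ¬ Tendsto x atTop (nhds 0) := by
    intro h
    have h0 := tendsto_nhds_unique h part4
    have hsM : (0:ℝ) < Real.sqrt M := Real.sqrt_pos.mpr hM
    rcases lt_or_gt_of_ne hz with hc | hc
    · rw [Real.sign_of_neg hc] at h0
      have : (-1 : ℝ) / Real.sqrt M ≠ 0 := div_ne_zero (by norm_num) hsM.ne'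
      exact this h0.symm
    · rw [Real.sign_of_pos hc] at h0
      have : (1 : ℝ) / Real.sqrt M ≠ 0 := div_ne_zero one_ne_zero hsM.ne'
      exact this h0.symm
  exact ⟨part1, part2, part3, part4, part5, part6⟩
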